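/- Let O be a nonempty closed convex subset of ℝ² with metric projection Π, let k, ε, r, δ > 0, a ∈ {1, −1}, let S = {x ∈ ℝ² : infDist(x, O) ≥ δ}, and let u : S → ℝ² be the wall-following field u(x) = k·((ε/2 + r − ‖x − Π(x)‖)·n(x) + a·(√3·ε/2)·(J n(x))) with n(x) = (x − Π(x))/‖x − Π(x)‖. Let I ⊆ ℝ be an interval, t₀ ∈ I, and let γ₁, γ₂ : ℝ → ℝ² be differentiable on I with γᵢ(t) ∈ S and γᵢ'(t) = u(γᵢ(t)) for all t ∈ I (i = 1, 2). If γ₁(t₀) = γ₂(t₀), then γ₁(t) = γ₂(t) for all t ∈ I. -/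

import Mathlib

set_option maxHeartbeats 1000000


open Metric

/-- Counterclockwise rotation by π/2 in the Euclidean plane. -/
noncomputable def J (p : EuclideanSpace ℝ (Fin 2)) : EuclideanSpace ℝ (Fin 2) :=
  WithLp.toLp 2 ![-p 1, p 0]

lemma J_sub (p q : EuclideanSpace ℝ (Fin 2)) : J p - J q = J (p - q) := by
  ext i
  fin_cases i <;> simp [J, PiLp.sub_apply] <;> ring

lemma J_norm (p : EuclideanSpace ℝ (Fin 2)) : ‖J p‖ = ‖p‖ := by
  rw [EuclideanSpace.norm_eq, EuclideanSpace.norm_eq]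
  congr 1
  rw [Fin.sum_univ_two, Fin.sum_univ_two]
  simp [J]
  ring

/-- Uniqueness part of Proposition 1(ii): solutions of the ODE ẋ = u(x) for the
wall-following field that remain at distance at least δ from the obstacle are
unique. -/
theorem wall_following_flow_unique
    (O : Set (EuclideanSpace ℝ (Fin 2))) (hO : O.Nonempty)
    (hOc : IsClosed O) (hOconv : Convex ℝ O)
    (proj : EuclideanSpace ℝ (Fin 2) → EuclideanSpace ℝ (Fin 2))
    (hprojmem : ∀ x, proj x ∈ O)
    (hprojnear : ∀ x, ∀ y ∈ O, ‖x - proj x‖ ≤ ‖x - y‖)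
    (k ε r δ : ℝ) (hk : 0 < k) (hε : 0 < ε) (hr : 0 < r) (hδ : 0 < δ)
    (a : ℝ) (ha : a = 1 ∨ a = -1)
    (S : Set (EuclideanSpace ℝ (Fin 2)))
    (hS : S = {x | δ ≤ infDist x O})
    (n u : EuclideanSpace ℝ (Fin 2) → EuclideanSpace ℝ (Fin 2))
    (hn : ∀ x ∈ S, n x = ‖x - proj x‖⁻¹ • (x - proj x))
    (hu : ∀ x ∈ S, u x = k • ((ε / 2 + r - ‖x - proj x‖) • n x +
      (a * (Real.sqrt 3 * ε / 2)) • J (n x)))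
    (I : Set ℝ) (hI : I.OrdConnected) (t₀ : ℝ) (ht₀ : t₀ ∈ I)
    (γ₁ γ₂ : ℝ → EuclideanSpace ℝ (Fin 2))
    (hγ₁S : ∀ t ∈ I, γ₁ t ∈ S) (hγ₂S : ∀ t ∈ I, γ₂ t ∈ S)
    (hγ₁ : ∀ t ∈ I, HasDerivAt γ₁ (u (γ₁ t)) t)
    (hγ₂ : ∀ t ∈ I, HasDerivAt γ₂ (u (γ₂ t)) t)
    (hinit : γ₁ t₀ = γ₂ t₀) :
    ∀ t ∈ I, γ₁ t = γ₂ t := by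
  -- infDist is achieved at the projection
  have hinf : ∀ x, infDist x O = ‖x - proj x‖ := by
    intro x
    refine le_antisymm ?_ ?_
    · rw [← dist_eq_norm]
      exact infDist_le_dist_of_mem (hprojmem x)
    · haveI := hO.to_subtype
      rw [infDist_eq_iInf]
      refine le_ciInf fun w => ?_
      rw [dist_eq_norm]
      exact hprojnear x w w.2
  have hδ' : ∀ x ∈ S, δ ≤ ‖x - proj x‖ := by
    intro x hx
    rw [hS] at hx
    rw [← hinf x]
    exact hx
  -- variational characterization of the projection
  haveI := hO.to_subtype
  have hchar : ∀ x, ∀ w ∈ O, inner ℝ (x - proj x) (w - proj x) ≤ (0:ℝ) := by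
    intro x
    have h1 : ‖x - proj x‖ = ⨅ w : O, ‖x - w‖ := by
      refine le_antisymm (le_ciInf fun w => hprojnear x w w.2) ?_
      have hbdd : BddBelow (Set.range fun w : O => ‖x - (w : EuclideanSpace ℝ (Fin 2))‖) := by
        refine ⟨0, ?_⟩
        rintro z ⟨w, rfl⟩
        positivity
      exact ciInf_le hbdd ⟨proj x, hprojmem x⟩
    exact (norm_eq_iInf_iff_real_inner_le_zero hOconv (hprojmem x)).mp h1
  -- the projection is 1-Lipschitz
  have hproj_lip : ∀ x y, ‖proj x - proj y‖ ≤ ‖x - y‖ := by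
    intro x y
    have h1 := hchar x (proj y) (hprojmem y)
    have h2 := hchar y (proj x) (hprojmem x)
    have hsum : (inner ℝ (x - proj x) (proj y - proj x) : ℝ)
        + inner ℝ (y - proj y) (proj x - proj y)
        = inner ℝ (x - y) (proj y - proj x)
          + inner ℝ (proj y - proj x) (proj y - proj x) := by
      simp only [inner_sub_left, inner_sub_right]
      ring
    have hself : (inner ℝ (proj y - proj x) (proj y - proj x) : ℝ)
        = ‖proj x - proj y‖ ^ 2 := by
      rw [real_inner_self_eq_norm_sq, norm_sub_rev]
    have hneg : (inner ℝ (x - y) (proj x - proj y) : ℝ)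
        = - inner ℝ (x - y) (proj y - proj x) := by
      have e : proj x - proj y = -(proj y - proj x) := by abel
      rw [e, inner_neg_right]
    have key : ‖proj x - proj y‖ ^ 2 ≤ (inner ℝ (x - y) (proj x - proj y) : ℝ) := by
      rw [hneg]
      linarith [h1, h2, hsum, hself]
    have h4 : (inner ℝ (x - y) (proj x - proj y) : ℝ) ≤ ‖x - y‖ * ‖proj x - proj y‖ :=
      real_inner_le_norm _ _
    rcases eq_or_lt_of_le (norm_nonneg (proj x - proj y)) with h0 | h0
    · rw [← h0]
      exact norm_nonneg _
    · have hm : ‖proj x - proj y‖ * ‖proj x - proj y‖ ≤ ‖x - y‖ * ‖proj x - proj y‖ := by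
        nlinarith
      exact le_of_mul_le_mul_right hm h0
  -- basic facts about n
  have hne : ∀ x ∈ S, x - proj x ≠ 0 := by
    intro x hx h
    have := hδ' x hx
    rw [h, norm_zero] at this
    linarith
  have hnunit : ∀ x ∈ S, ‖n x‖ = 1 := by
    intro x hx
    rw [hn x hx]
    exact norm_smul_inv_norm (𝕜 := ℝ) (hne x hx)
  have hfd : ∀ x y, ‖(x - proj x) - (y - proj y)‖ ≤ 2 * ‖x - y‖ := by
    intro x y
    have e : (x - proj x) - (y - proj y) = (x - y) - (proj x - proj y) := by abel
    rw [e]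
    calc ‖(x - y) - (proj x - proj y)‖ ≤ ‖x - y‖ + ‖proj x - proj y‖ := norm_sub_le _ _
      _ ≤ ‖x - y‖ + ‖x - y‖ := by linarith [hproj_lip x y]
      _ = 2 * ‖x - y‖ := by ring
  -- n is Lipschitz on S
  have hnlip : ∀ x ∈ S, ∀ y ∈ S, ‖n x - n y‖ ≤ (4 / δ) * ‖x - y‖ := by
    intro x hx y hy
    have hax : δ ≤ ‖x - proj x‖ := hδ' x hx
    have hay : δ ≤ ‖y - proj y‖ := hδ' y hy
    set fx := x - proj x with hfx
    set fy := y - proj y with hfy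
    have hxpos : (0:ℝ) < ‖fx‖ := lt_of_lt_of_le hδ hax
    have hypos : (0:ℝ) < ‖fy‖ := lt_of_lt_of_le hδ hay
    rw [hn x hx, hn y hy]
    have decomp : ‖fx‖⁻¹ • fx - ‖fy‖⁻¹ • fy
        = ‖fx‖⁻¹ • (fx - fy) + (‖fx‖⁻¹ - ‖fy‖⁻¹) • fy := by
      module
    rw [decomp]
    have h1 : ‖‖fx‖⁻¹ • (fx - fy)‖ ≤ δ⁻¹ * ‖fx - fy‖ := by
      rw [norm_smul, Real.norm_eq_abs, abs_of_pos (inv_pos.mpr hxpos)]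
      gcongr
    have h2 : ‖(‖fx‖⁻¹ - ‖fy‖⁻¹) • fy‖ ≤ δ⁻¹ * ‖fx - fy‖ := by
      rw [norm_smul, Real.norm_eq_abs]
      have habs : |‖fx‖⁻¹ - ‖fy‖⁻¹| = |‖fy‖ - ‖fx‖| / (‖fx‖ * ‖fy‖) := by
        rw [inv_sub_inv hxpos.ne' hypos.ne', abs_div, abs_of_pos (mul_pos hxpos hypos)]
      have hab : |‖fy‖ - ‖fx‖| ≤ ‖fx - fy‖ := by
        rw [abs_sub_comm]
        exact abs_norm_sub_norm_le _ _
      rw [habs]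
      have e1 : |‖fy‖ - ‖fx‖| / (‖fx‖ * ‖fy‖) * ‖fy‖ = |‖fy‖ - ‖fx‖| / ‖fx‖ := by
        field_simp
      rw [e1]
      calc |‖fy‖ - ‖fx‖| / ‖fx‖ ≤ ‖fx - fy‖ / ‖fx‖ := by gcongr
        _ ≤ ‖fx - fy‖ / δ := by gcongr
        _ = δ⁻¹ * ‖fx - fy‖ := by rw [div_eq_inv_mul]
    have hδinv : (0:ℝ) ≤ δ⁻¹ := le_of_lt (inv_pos.mpr hδ)
    calc ‖‖fx‖⁻¹ • (fx - fy) + (‖fx‖⁻¹ - ‖fy‖⁻¹) • fy‖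
        ≤ ‖‖fx‖⁻¹ • (fx - fy)‖ + ‖(‖fx‖⁻¹ - ‖fy‖⁻¹) • fy‖ := norm_add_le _ _
      _ ≤ δ⁻¹ * ‖fx - fy‖ + δ⁻¹ * ‖fx - fy‖ := by linarith
      _ = 2 * δ⁻¹ * ‖fx - fy‖ := by ring
      _ ≤ 2 * δ⁻¹ * (2 * ‖x - y‖) := by
          have := hfd x y
          nlinarith
      _ = (4 / δ) * ‖x - y‖ := by field_simp; ring
  -- rewrite u in a Lipschitz-friendly form
  set b := a * (Real.sqrt 3 * ε / 2) with hb
  have hu' : ∀ x ∈ S, u x = k • ((ε / 2 + r) • n x - (x - proj x) + b • J (n x)) := by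
    intro x hx
    rw [hu x hx]
    congr 1
    have hv : ‖x - proj x‖ • n x = x - proj x := by
      rw [hn x hx]
      exact smul_inv_smul₀ (norm_ne_zero_iff.mpr (hne x hx)) _
    rw [sub_smul, hv]
  -- u is Lipschitz on S
  set C : ℝ := k * ((ε / 2 + r + |b|) * (4 / δ) + 2) with hC
  have hC0 : 0 ≤ C := by
    have : (0:ℝ) ≤ |b| := abs_nonneg b
    have h4δ : (0:ℝ) ≤ 4 / δ := by positivity
    have : (0:ℝ) ≤ (ε / 2 + r + |b|) * (4 / δ) := by positivity
    nlinarith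
  have hulipkey : ∀ x ∈ S, ∀ y ∈ S, ‖u x - u y‖ ≤ C * ‖x - y‖ := by
    intro x hx y hy
    rw [hu' x hx, hu' y hy, ← smul_sub, norm_smul, Real.norm_eq_abs, abs_of_pos hk]
    have e : (ε / 2 + r) • n x - (x - proj x) + b • J (n x)
        - ((ε / 2 + r) • n y - (y - proj y) + b • J (n y))
        = (ε / 2 + r) • (n x - n y) - ((x - proj x) - (y - proj y))
          + b • (J (n x) - J (n y)) := by
      rw [smul_sub, smul_sub]; abel
    rw [e]
    have h1 : ‖(ε / 2 + r) • (n x - n y)‖ ≤ (ε / 2 + r) * ((4 / δ) * ‖x - y‖) := by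
      rw [norm_smul, Real.norm_eq_abs, abs_of_pos (by positivity)]
      gcongr
      exact hnlip x hx y hy
    have h2 : ‖(x - proj x) - (y - proj y)‖ ≤ 2 * ‖x - y‖ := hfd x y
    have h3 : ‖b • (J (n x) - J (n y))‖ ≤ |b| * ((4 / δ) * ‖x - y‖) := by
      rw [norm_smul, Real.norm_eq_abs, J_sub, J_norm]
      gcongr
      exact hnlip x hx y hy
    have htri : ‖(ε / 2 + r) • (n x - n y) - ((x - proj x) - (y - proj y))
        + b • (J (n x) - J (n y))‖
        ≤ ‖(ε / 2 + r) • (n x - n y)‖ + ‖(x - proj x) - (y - proj y)‖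
          + ‖b • (J (n x) - J (n y))‖ := by
      calc ‖(ε / 2 + r) • (n x - n y) - ((x - proj x) - (y - proj y))
          + b • (J (n x) - J (n y))‖
          ≤ ‖(ε / 2 + r) • (n x - n y) - ((x - proj x) - (y - proj y))‖
            + ‖b • (J (n x) - J (n y))‖ := norm_add_le _ _
        _ ≤ ‖(ε / 2 + r) • (n x - n y)‖ + ‖(x - proj x) - (y - proj y)‖
            + ‖b • (J (n x) - J (n y))‖ := by
              have := norm_sub_le ((ε / 2 + r) • (n x - n y)) ((x - proj x) - (y - proj y))
              linarith
    rw [hC]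
    calc k * ‖(ε / 2 + r) • (n x - n y) - ((x - proj x) - (y - proj y))
        + b • (J (n x) - J (n y))‖
        ≤ k * ((ε / 2 + r) * ((4 / δ) * ‖x - y‖) + 2 * ‖x - y‖
            + |b| * ((4 / δ) * ‖x - y‖)) := by
          have := htri
          nlinarith [h1, h2, h3, htri, hk.le]
      _ = k * ((ε / 2 + r + |b|) * (4 / δ) + 2) * ‖x - y‖ := by ring
  have hulip : ∀ s : ℝ, LipschitzOnWith (Real.toNNReal C) u S := by
    intro s
    apply LipschitzOnWith.of_dist_le_mul
    intro x hx y hy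
    rw [dist_eq_norm, dist_eq_norm, Real.coe_toNNReal _ hC0]
    exact hulipkey x hx y hy
  -- conclude by uniqueness of ODE solutions
  intro t ht
  rcases le_total t₀ t with hle | hle
  · have hsub : Set.Icc t₀ t ⊆ I := hI.out ht₀ ht
    have := ODE_solution_unique_of_mem_Icc_right (v := fun _ => u) (s := fun _ => S)
      (K := Real.toNNReal C) (fun s _ => hulip s)
      (fun s hs => ((hγ₁ s (hsub hs)).continuousAt).continuousWithinAt)
      (fun s hs => (hγ₁ s (hsub (Set.Ico_subset_Icc_self hs))).hasDerivWithinAt)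
      (fun s hs => hγ₁S s (hsub (Set.Ico_subset_Icc_self hs)))
      (fun s hs => ((hγ₂ s (hsub hs)).continuousAt).continuousWithinAt)
      (fun s hs => (hγ₂ s (hsub (Set.Ico_subset_Icc_self hs))).hasDerivWithinAt)
      (fun s hs => hγ₂S s (hsub (Set.Ico_subset_Icc_self hs)))
      hinit
    exact this ⟨hle, le_rfl⟩
  · have hsub : Set.Icc t t₀ ⊆ I := hI.out ht ht₀
    have := ODE_solution_unique_of_mem_Icc_left (v := fun _ => u) (s := fun _ => S)
      (K := Real.toNNReal C) (fun s _ => hulip s)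
      (fun s hs => ((hγ₁ s (hsub hs)).continuousAt).continuousWithinAt)
      (fun s hs => (hγ₁ s (hsub (Set.Ioc_subset_Icc_self hs))).hasDerivWithinAt)
      (fun s hs => hγ₁S s (hsub (Set.Ioc_subset_Icc_self hs)))
      (fun s hs => ((hγ₂ s (hsub hs)).continuousAt).continuousWithinAt)
      (fun s hs => (hγ₂ s (hsub (Set.Ioc_subset_Icc_self hs))).hasDerivWithinAt)
      (fun s hs => hγ₂S s (hsub (Set.Ioc_subset_Icc_self hs)))
      hinit
    exact this ⟨le_rfl, hle⟩
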